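/- Let n be a positive integer with ν₂(n) = v and let k = v + 1. Then the Frobenius number of S = ⟨n, n+2⁰, n+2¹, ..., n+2^k⟩ is F(S) = n²/2^k + (k - 3/2)n - 1. -/

import Mathlib

lemma lemA (v : ℕ) : ∀ m : ℕ, ∀ x : ℕ → ℕ, 1 ≤ m →
    (∑ i ∈ Finset.range (v+2), 2^i * x i) = m * 2^v - 1 →
    m / 2 + v ≤ ∑ i ∈ Finset.range (v+2), x i := by
  induction v with
  | zero =>
      intro m x hm h
      simp [Finset.sum_range_succ] at h ⊢
      omega
  | succ v ih =>
      intro m x hm h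
      set M := m * 2^v with hM
      have hM1 : 1 ≤ M := Nat.one_le_iff_ne_zero.2 (by positivity)
      have hpow : m * 2^(v+1) = 2 * M := by rw [hM]; ring
      rw [hpow] at h
      set B := ∑ i ∈ Finset.range (v+1), 2^i * x (i+2) with hB
      have e1 : ∑ i ∈ Finset.range (v+3), 2^i * x i = 4 * B + 2 * x 1 + x 0 := by
        rw [Finset.sum_range_succ' (fun i => 2^i * x i),
            Finset.sum_range_succ' (fun i => 2^(i+1) * x (i+1))]
        have t1 : ∑ i ∈ Finset.range (v+1), 2^(i+1+1) * x (i+1+1) = 4 * B := by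
          rw [hB, Finset.mul_sum]
          refine Finset.sum_congr rfl fun i _ => by ring
        rw [t1]
        norm_num
      rw [e1] at h
      obtain ⟨y, hy⟩ : ∃ y, x 0 = 2*y + 1 := ⟨x 0 / 2, by omega⟩
      set x' : ℕ → ℕ := fun i => if i = 0 then y + x 1 else x (i+1) with hx'
      have hx'succ : ∀ i : ℕ, x' (i+1) = x (i+2) := by
        intro i; rw [hx']; simp
      have hx'0 : x' 0 = y + x 1 := by simp [hx']
      have e2 : ∑ i ∈ Finset.range (v+2), 2^i * x' i = 2*B + x 1 + y := by
        rw [Finset.sum_range_succ' (fun i => 2^i * x' i)]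
        have t1 : ∑ i ∈ Finset.range (v+1), 2^(i+1) * x' (i+1) = 2 * B := by
          rw [hB, Finset.mul_sum]
          refine Finset.sum_congr rfl fun i _ => ?_
          rw [hx'succ]; ring
        rw [t1, hx'0]
        norm_num
        ring
      have e3 : ∑ i ∈ Finset.range (v+2), 2^i * x' i = m * 2^v - 1 := by
        rw [e2, ← hM]; omega
      have hIH := ih m x' hm e3
      have c1 : ∑ i ∈ Finset.range (v+2), x' i
          = (∑ i ∈ Finset.range (v+1), x (i+2)) + x 1 + y := by
        rw [Finset.sum_range_succ' (fun i => x' i)]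
        have t1 : ∑ i ∈ Finset.range (v+1), x' (i+1) = ∑ i ∈ Finset.range (v+1), x (i+2) :=
          Finset.sum_congr rfl fun i _ => hx'succ i
        rw [t1, hx'0]
        ring
      have c2 : ∑ i ∈ Finset.range (v+3), x i
          = (∑ i ∈ Finset.range (v+1), x (i+2)) + x 1 + x 0 := by
        rw [Finset.sum_range_succ' (fun i => x i),
            Finset.sum_range_succ' (fun i => x (i+1))]
      rw [c1] at hIH
      rw [c2]
      omega

lemma lemB : ∀ L ρ : ℕ, ρ < 2^L →
    ∃ x : ℕ → ℕ, (∑ i ∈ Finset.range L, 2^i * x i = ρ) ∧ (∑ i ∈ Finset.range L, x i ≤ L) := by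
  intro L
  induction L with
  | zero =>
      intro ρ h
      refine ⟨fun _ => 0, by simpa using (by omega : ρ = 0).symm, by simp⟩
  | succ L ih =>
      intro ρ h
      have h2 : ρ / 2 < 2^L := by rw [pow_succ] at h; omega
      obtain ⟨x', h1, hc⟩ := ih (ρ/2) h2
      set x : ℕ → ℕ := fun i => if i = 0 then ρ % 2 else x' (i-1) with hx
      have hxs : ∀ i : ℕ, x (i+1) = x' i := by intro i; rw [hx]; simp
      have hx0 : x 0 = ρ % 2 := by simp [hx]
      refine ⟨x, ?_, ?_⟩
      · rw [Finset.sum_range_succ' (fun i => 2^i * x i)]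
        have t1 : ∑ i ∈ Finset.range L, 2^(i+1) * x (i+1) = 2 * (ρ/2) := by
          rw [← h1, Finset.mul_sum]
          refine Finset.sum_congr rfl fun i _ => ?_
          rw [hxs]; ring
        rw [t1, hx0]
        simp
        omega
      · rw [Finset.sum_range_succ' (fun i => x i)]
        have t1 : ∑ i ∈ Finset.range L, x (i+1) = ∑ i ∈ Finset.range L, x' i :=
          Finset.sum_congr rfl fun i _ => hxs i
        rw [t1, hx0]
        omega

-- every r < n = 2^v * u (u odd) is a sum of at most u/2 + v powers 2^0..2^(v+1)
lemma lemC (v u : ℕ) (hu : u % 2 = 1) (r : ℕ) (hr : r < 2^v * u) :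
    ∃ x : ℕ → ℕ, (∑ i ∈ Finset.range (v+2), 2^i * x i = r) ∧
      (∑ i ∈ Finset.range (v+2), x i ≤ u/2 + v) := by
  set q := r / 2^(v+1) with hq
  set ρ := r % 2^(v+1) with hρ
  have hdm : 2^(v+1) * q + ρ = r := Nat.div_add_mod r (2^(v+1))
  have hρlt : ρ < 2^(v+1) := Nat.mod_lt _ (by positivity)
  have hps : (2:ℕ)^(v+1) = 2 * 2^v := by ring
  by_cases hcase : ρ < 2^v
  · obtain ⟨x0, e, c⟩ := lemB v ρ hcase
    have hqle : 2 * q < u := by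
      have h1 : 2^(v+1) * q ≤ r := by omega
      have h2 : 2^v * (2*q) ≤ r := by
        have : 2^v * (2*q) = 2^(v+1) * q := by ring
        omega
      have := lt_of_le_of_lt h2 hr
      exact lt_of_mul_lt_mul_left this (Nat.zero_le _)
    set x : ℕ → ℕ := fun i => if i = v+1 then q else (if i < v then x0 i else 0) with hx
    have hxtop : x (v+1) = q := by simp [hx]
    have hxlow : ∀ i, i < v → x i = x0 i := by
      intro i hi; simp only [hx]; rw [if_neg (by omega), if_pos hi]
    have hxv : x v = 0 := by
      simp only [hx]; rw [if_neg (by omega), if_neg (by omega)]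
    refine ⟨x, ?_, ?_⟩
    · rw [Finset.sum_range_succ (fun i => 2^i * x i), Finset.sum_range_succ (fun i => 2^i * x i)]
      have t1 : ∑ i ∈ Finset.range v, 2^i * x i = ρ := by
        rw [← e]
        refine Finset.sum_congr rfl fun i hi => ?_
        rw [hxlow i (Finset.mem_range.1 hi)]
      rw [t1, hxv, hxtop]
      omega
    · rw [Finset.sum_range_succ (fun i => x i), Finset.sum_range_succ (fun i => x i)]
      have t1 : ∑ i ∈ Finset.range v, x i = ∑ i ∈ Finset.range v, x0 i := by
        refine Finset.sum_congr rfl fun i hi => hxlow i (Finset.mem_range.1 hi)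
      rw [t1, hxv, hxtop]
      omega
  · obtain ⟨x0, e, c⟩ := lemB (v+1) ρ hρlt
    have hqle : 2 * q + 1 < u := by
      have h2 : 2^v * (2*q+1) ≤ r := by
        have : 2^v * (2*q+1) = 2^(v+1) * q + 2^v := by ring
        omega
      have := lt_of_le_of_lt h2 hr
      exact lt_of_mul_lt_mul_left this (Nat.zero_le _)
    set x : ℕ → ℕ := fun i => if i = v+1 then q else x0 i with hx
    have hxtop : x (v+1) = q := by simp [hx]
    have hxlow : ∀ i, i < v+1 → x i = x0 i := by
      intro i hi; simp only [hx]; rw [if_neg (by omega)]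
    refine ⟨x, ?_, ?_⟩
    · rw [Finset.sum_range_succ (fun i => 2^i * x i)]
      have t1 : ∑ i ∈ Finset.range (v+1), 2^i * x i = ρ := by
        rw [← e]
        refine Finset.sum_congr rfl fun i hi => ?_
        rw [hxlow i (Finset.mem_range.1 hi)]
      rw [t1, hxtop]
      omega
    · rw [Finset.sum_range_succ (fun i => x i)]
      have t1 : ∑ i ∈ Finset.range (v+1), x i = ∑ i ∈ Finset.range (v+1), x0 i := by
        refine Finset.sum_congr rfl fun i hi => hxlow i (Finset.mem_range.1 hi)
      rw [t1, hxtop]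
      omega

theorem stmt_15 (n : ℕ) (hn : 0 < n) (F : ℕ)
    (hF : IsGreatest {m : ℕ | ¬∃ c : ℕ, ∃ x : ℕ → ℕ,
        m = n * c + ∑ i ∈ Finset.range (padicValNat 2 n + 2), (n + 2 ^ i) * x i} F) :
    (F : ℚ) = (n : ℚ) ^ 2 / 2 ^ (padicValNat 2 n + 1) +
      (((padicValNat 2 n : ℚ) + 1) - 3 / 2) * n - 1 := by
  by_cases h1 : n = 1
  · exfalso
    apply hF.1
    subst h1
    exact ⟨F, fun _ => 0, by simp⟩
  set v := padicValNat 2 n with hv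
  have hn0 : n ≠ 0 := by omega
  obtain ⟨u, hu⟩ : 2^v ∣ n := pow_padicValNat_dvd
  have hu2 : u % 2 = 1 := by
    rcases Nat.even_or_odd u with he | ho
    · exfalso
      obtain ⟨w, hw⟩ := he
      have : 2^(v+1) ∣ n := ⟨w, by rw [hu, hw]; ring⟩
      exact pow_succ_padicValNat_not_dvd hn0 this
    · obtain ⟨w, hw⟩ := ho; omega
  have hu1 : 1 ≤ u := by
    rcases Nat.eq_zero_or_pos u with h | h
    · exfalso; apply hn0; rw [hu, h, mul_zero]
    · exact h
  set T := u/2 + v with hT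
  have hT1 : 1 ≤ T := by
    by_contra h0
    push_neg at h0
    have hv0 : v = 0 := by omega
    have huu : u = 1 := by omega
    apply h1
    rw [hu, hv0, huu]
  -- the sum-splitting identity
  have hsplit : ∀ x : ℕ → ℕ, ∑ i ∈ Finset.range (v+2), (n + 2^i) * x i
      = n * (∑ i ∈ Finset.range (v+2), x i) + ∑ i ∈ Finset.range (v+2), 2^i * x i := by
    intro x
    rw [Finset.mul_sum, ← Finset.sum_add_distrib]
    refine Finset.sum_congr rfl fun i _ => by ring
  have hgreat : IsGreatest {m : ℕ | ¬∃ c : ℕ, ∃ x : ℕ → ℕ,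
      m = n * c + ∑ i ∈ Finset.range (v + 2), (n + 2 ^ i) * x i} (n * T - 1) := by
    constructor
    · -- n*T - 1 is not representable
      rintro ⟨c, x, hcx⟩
      set X := ∑ i ∈ Finset.range (v+2), x i with hX
      set P := ∑ i ∈ Finset.range (v+2), 2^i * x i with hP
      rw [hsplit x, ← hX, ← hP] at hcx
      have hnT : 1 ≤ n * T := Nat.one_le_iff_ne_zero.2 (by positivity)
      have heq : n * T = n * c + n * X + P + 1 := by omega
      have hlt : c + X < T := by
        by_contra hcon
        push_neg at hcon
        have h2 : n * T ≤ n * (c + X) := Nat.mul_le_mul_left n hcon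
        have h3 : n * (c + X) = n * c + n * X := by ring
        omega
      set t := T - (c + X) with ht
      have ht1 : 1 ≤ t := by omega
      have hTt : T = (c + X) + t := by omega
      have h4 : n * T = n * c + n * X + n * t := by rw [hTt]; ring
      have hPt : P + 1 = n * t := by omega
      have hP2 : P = (u * t) * 2^v - 1 := by
        have : n * t = (u * t) * 2^v := by rw [hu]; ring
        omega
      have hut1 : 1 ≤ u * t := Nat.one_le_iff_ne_zero.2 (by positivity)
      have hlow := lemA v (u*t) x hut1 (by rw [← hP, hP2])
      rw [← hX] at hlow
      have hmon : u / 2 ≤ (u * t) / 2 := Nat.div_le_div_right (Nat.le_mul_of_pos_right u ht1)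
      omega
    · -- upper bound
      intro m hm
      by_contra hgt
      push_neg at hgt
      have hmT : n * T ≤ m := by omega
      apply hm
      set r := m % n with hr
      set t := m / n with htdef
      have hrn : r < n := Nat.mod_lt _ (by omega)
      have hdm : n * t + r = m := Nat.div_add_mod m n
      have htT : T ≤ t := by
        rw [htdef]
        exact Nat.le_div_iff_mul_le (by omega) |>.2 (by rw [mul_comm]; exact hmT)
      obtain ⟨x, hx1, hx2⟩ := lemC v u hu2 r (by rw [← hu]; exact hrn)
      set X := ∑ i ∈ Finset.range (v+2), x i with hX
      have hXt : X ≤ t := le_trans hx2 (le_trans (le_of_eq hT.symm) htT)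
      refine ⟨t - X, x, ?_⟩
      rw [hsplit x]
      have h5 : n * (t - X) + n * (∑ i ∈ Finset.range (v+2), x i) = n * t := by
        rw [← Nat.mul_add]
        congr 1
        omega
      omega
  have hFeq : F = n * T - 1 := hF.unique hgreat
  -- final rational computation
  obtain ⟨w, hw⟩ : ∃ w, u = 2*w + 1 := ⟨u/2, by omega⟩
  have hnT : 1 ≤ n * T := Nat.one_le_iff_ne_zero.2 (by positivity)
  have hcast : (F : ℚ) = (n : ℚ) * T - 1 := by
    rw [hFeq]
    push_cast [Nat.cast_sub hnT]
    ring
  rw [hcast]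
  have hnQ : (n : ℚ) = 2^v * (2*w + 1) := by
    rw [hu, hw]; push_cast; ring
  have hTQ : (T : ℚ) = w + v := by
    rw [hT, hw]
    have : (2*w+1)/2 = w := by omega
    rw [this]
    push_cast
    ring
  rw [hnQ, hTQ]
  have h2v : (2:ℚ)^v ≠ 0 := by positivity
  have hps : (2:ℚ)^(v+1) = 2 * 2^v := by ring
  rw [hps]
  field_simp
  ring
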